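/- Let κ be a regular uncountable cardinal. Let StrΣ denote the category whose objects are triples (M, m, P) with M a set, m : M × M → M a binary operation and P ⊆ M a subset, and whose morphisms (M, m, P) → (N, n, Q) are functions f : M → N satisfying f(m(x, y)) = n(f(x), f(y)) for all x, y ∈ M and f(P) ⊆ Q. Let 𝒜 be the full subcategory of StrΣ consisting of those objects (M, m, P) such that (M, m) is an abelian group and P = R_ℤ(M). Suppose the inclusion functor 𝒜 ↪ StrΣ preserves κ-directed colimits, i.e. whenever D is a diagram in 𝒜 indexed by a κ-directed partial order and (C, (c_i)) is a colimit cocone of D in 𝒜, then (C, (c_i)) is also a colimit cocone of D in StrΣ. Then for every abelian group G, R_ℤ(G) = R_ℤ^κ(G). -/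

import Mathlib

open Cardinal

universe u

/-- The radical singly generated by `X`: `R_X(G)` is the intersection of the kernels of all
group homomorphisms `G → X`. -/
def radical (X : Type*) (G : Type*) [AddCommGroup X] [AddCommGroup G] : AddSubgroup G :=
  ⨅ f : G →+ X, f.ker

/-- `R_X^κ(G)`: the sum of the subgroups `R_X(A)` (viewed inside `G` via the inclusion
`A ≤ G`), where `A` ranges over the subgroups of `G` of cardinality less than `κ`. -/
def radicalK (κ : Cardinal.{u}) (X : Type v) (G : Type u)
    [AddCommGroup X] [AddCommGroup G] : AddSubgroup G :=
  ⨆ A ∈ {A : AddSubgroup G | #A < κ}, (radical X A).map A.subtype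

/-- An object of the category `StrΣ`: a set equipped with a binary operation and a unary
predicate (a subset). -/
structure StrSig : Type (u + 1) where
  carrier : Type u
  op : carrier → carrier → carrier
  pred : Set carrier

/-- Morphisms of `StrΣ`: functions commuting with the binary operations and preserving the
predicates in the forward direction. -/
def IsStrHom (M N : StrSig.{u}) (f : M.carrier → N.carrier) : Prop :=
  (∀ x y : M.carrier, f (M.op x y) = N.op (f x) (f y)) ∧ ∀ x ∈ M.pred, f x ∈ N.pred

/-- The objects of the full subcategory `𝒜` of `StrΣ`: those `(M, m, P)` such that
`(M, m)` is an abelian group and `P = R_ℤ(M)`. -/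
def InA (M : StrSig.{u}) : Prop :=
  ∃ inst : AddCommGroup M.carrier,
    (∀ x y : M.carrier, M.op x y = x + y) ∧
    M.pred = (radical ℤ M.carrier : AddSubgroup M.carrier)

/-- A diagram in `StrΣ` indexed by a preorder `I`. -/
structure DiagS (I : Type u) [Preorder I] : Type (u + 1) where
  obj : I → StrSig.{u}
  map : ∀ i j : I, i ≤ j → (obj i).carrier → (obj j).carrier
  map_isHom : ∀ (i j : I) (h : i ≤ j), IsStrHom (obj i) (obj j) (map i j h)
  map_id : ∀ (i : I) (x : (obj i).carrier), map i i le_rfl x = x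
  map_comp : ∀ (i j k : I) (hij : i ≤ j) (hjk : j ≤ k) (x : (obj i).carrier),
    map j k hjk (map i j hij x) = map i k (hij.trans hjk) x

/-- `(C, c)` is a colimit cocone of the diagram `D` in the full subcategory of `StrΣ`
determined by the predicate `S`: it is a cocone, and every cocone of `D` with vertex
satisfying `S` factors through it via a unique `StrΣ`-morphism.  (Taking `S := fun _ => True`
gives colimit cocones in `StrΣ` itself.) -/
def IsColimitAmong (S : StrSig.{u} → Prop) {I : Type u} [Preorder I] (D : DiagS I)
    (C : StrSig.{u}) (c : ∀ i : I, (D.obj i).carrier → C.carrier) : Prop :=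
  (∀ i : I, IsStrHom (D.obj i) C (c i)) ∧
  (∀ (i j : I) (hij : i ≤ j) (x : (D.obj i).carrier), c j (D.map i j hij x) = c i x) ∧
  ∀ (Z : StrSig.{u}), S Z → ∀ z : ∀ i : I, (D.obj i).carrier → Z.carrier,
    (∀ i : I, IsStrHom (D.obj i) Z (z i)) →
    (∀ (i j : I) (hij : i ≤ j) (x : (D.obj i).carrier), z j (D.map i j hij x) = z i x) →
    ∃! g : C.carrier → Z.carrier, IsStrHom C Z g ∧ ∀ (i : I) (x : (D.obj i).carrier),
      g (c i x) = z i x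

lemma map_radical {G H : Type*} [AddCommGroup G] [AddCommGroup H] (f : G →+ H) {x : G}
    (hx : x ∈ radical ℤ G) : f x ∈ radical ℤ H := by
  simp only [radical, AddSubgroup.mem_iInf, AddMonoidHom.mem_ker] at hx ⊢
  intro g
  exact hx (g.comp f)

lemma mk_closure_le {G : Type u} [AddCommGroup G] (s : Set G) :
    #(AddSubgroup.closure s) ≤ max #s ℵ₀ := by
  classical
  set f : List (s × Bool) → G :=
    fun l => (l.map fun p : s × Bool => if p.2 then (p.1 : G) else -(p.1 : G)).sum with hf
  have fneg : ∀ l : List (s × Bool), f (l.map fun p => (p.1, !p.2)) = -(f l) := by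
    intro l
    induction l with
    | nil => simp [f]
    | cons hd tl ih =>
      cases h2 : hd.2 <;> simp [f, h2, neg_add] at ih ⊢ <;> rw [ih] <;> exact add_comm _ _
  have hsub : (AddSubgroup.closure s : Set G) ⊆ Set.range f := by
    intro x hx
    induction hx using AddSubgroup.closure_induction with
    | mem y hy => exact ⟨[(⟨y, hy⟩, true)], by simp [f]⟩
    | zero => exact ⟨[], by simp [f]⟩
    | add a b _ _ ha hb =>
      obtain ⟨l1, h1⟩ := ha; obtain ⟨l2, h2⟩ := hb
      exact ⟨l1 ++ l2, by simp [f] at h1 h2 ⊢; rw [h1, h2]⟩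
    | neg a _ ha =>
      obtain ⟨l, hl⟩ := ha
      exact ⟨l.map fun p => (p.1, !p.2), by rw [fneg, hl]⟩
  have h1 : #(AddSubgroup.closure s) ≤ #(List (s × Bool)) :=
    (Cardinal.mk_le_mk_of_subset hsub).trans (Cardinal.mk_range_le)
  have h2 : #(s × Bool) ≤ max #s ℵ₀ := by
    have : #(s × Bool) = #s * 2 := by simp
    rw [this]
    refine (Cardinal.mul_le_max _ _).trans (max_le (max_le (le_max_left _ _) ?_) (le_max_right _ _))
    exact le_max_of_le_right (by exact_mod_cast (Cardinal.nat_lt_aleph0 2).le)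
  calc #(AddSubgroup.closure s) ≤ #(List (s × Bool)) := h1
    _ ≤ max ℵ₀ #(s × Bool) := Cardinal.mk_list_le_max _
    _ ≤ max #s ℵ₀ := max_le (le_max_right _ _) h2

/-- The index poset: subgroups of `G` of cardinality `< κ`. -/
abbrev SmallSub (κ : Cardinal.{u}) (G : Type u) [AddCommGroup G] : Type u :=
  {A : AddSubgroup G // #A < κ}

/-- The canonical diagram of small subgroups with their radicals. -/
def theDiag (κ : Cardinal.{u}) (G : Type u) [AddCommGroup G] : DiagS (SmallSub κ G) where
  obj A := ⟨A.val, (· + ·), (radical ℤ A.val : AddSubgroup A.val)⟩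
  map A B h := AddSubgroup.inclusion h
  map_isHom A B h := ⟨fun _ _ => rfl, fun _ hx => map_radical (AddSubgroup.inclusion h) hx⟩
  map_id A x := rfl
  map_comp A B C' hAB hBC x := rfl

lemma radSmall_single {G : Type u} [AddCommGroup G] {κ : Cardinal.{u}} (huncount : ℵ₀ < κ)
    (x : G) : #(AddSubgroup.closure ({x} : Set G)) < κ :=
  (mk_closure_le _).trans_lt (max_lt ((Set.finite_singleton x).lt_aleph0.trans huncount) huncount)

lemma radSmall_pair {G : Type u} [AddCommGroup G] {κ : Cardinal.{u}} (huncount : ℵ₀ < κ)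
    (x y : G) : #(AddSubgroup.closure ({x, y} : Set G)) < κ :=
  (mk_closure_le _).trans_lt
    (max_lt (((Set.finite_singleton y).insert x).lt_aleph0.trans huncount) huncount)

/-- The target cocone object. -/
def theC (G : Type u) [AddCommGroup G] : StrSig.{u} :=
  ⟨G, (· + ·), (radical ℤ G : AddSubgroup G)⟩

lemma colimA {κ : Cardinal.{u}} (huncount : ℵ₀ < κ) (G : Type u) [AddCommGroup G] :
    IsColimitAmong InA (theDiag κ G) (theC G) (fun A x => A.val.subtype x) := by
  refine ⟨fun A => ⟨fun _ _ => rfl, fun x hx => map_radical A.val.subtype hx⟩,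
    fun A B h x => rfl, ?_⟩
  intro Z _ z zhom zcompat
  obtain ⟨instZ, hop, hpred⟩ := ‹InA Z›
  -- the small subgroup generated by x
  let σ : G → SmallSub κ G := fun x => ⟨AddSubgroup.closure {x}, radSmall_single huncount x⟩
  have hmem : ∀ x : G, x ∈ (σ x).val := fun x => AddSubgroup.subset_closure rfl
  let g : G → Z.carrier := fun x => z (σ x) ⟨x, hmem x⟩
  have hcoh : ∀ (A : SmallSub κ G) (x : G) (hx : x ∈ A.val), z A ⟨x, hx⟩ = g x := by
    intro A x hx
    have hBκ : #(A.val ⊓ (σ x).val : AddSubgroup G) < κ :=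
      lt_of_le_of_lt (Cardinal.mk_le_mk_of_subset
        (fun y (hy : y ∈ A.val ⊓ (σ x).val) => hy.1)) A.2
    set B : SmallSub κ G := ⟨A.val ⊓ (σ x).val, hBκ⟩
    have hxB : x ∈ B.val := ⟨hx, hmem x⟩
    have e1 : z A ⟨x, hx⟩ = z B ⟨x, hxB⟩ := zcompat B A (Subtype.coe_le_coe.mp inf_le_left) ⟨x, hxB⟩
    have e2 : z (σ x) ⟨x, hmem x⟩ = z B ⟨x, hxB⟩ := zcompat B (σ x) (Subtype.coe_le_coe.mp inf_le_right) ⟨x, hxB⟩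
    exact e1.trans e2.symm
  have hadd : ∀ x y : G, g (x + y) = g x + g y := by
    intro x y
    set A : SmallSub κ G := ⟨AddSubgroup.closure {x, y}, radSmall_pair huncount x y⟩
    have hx : x ∈ A.val := AddSubgroup.subset_closure (by simp)
    have hy : y ∈ A.val := AddSubgroup.subset_closure (by simp)
    have hxy : x + y ∈ A.val := add_mem hx hy
    have h := (zhom A).1 ⟨x, hx⟩ ⟨y, hy⟩
    rw [hop] at h
    have h' : z A ⟨x + y, hxy⟩ = z A ⟨x, hx⟩ + z A ⟨y, hy⟩ := h
    rw [← hcoh A x hx, ← hcoh A y hy, ← hcoh A (x + y) hxy]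
    exact h'
  refine ⟨g, ⟨⟨fun x y => ?_, fun x hx => ?_⟩, fun A x => (hcoh A x.1 x.2).symm⟩, ?_⟩
  · rw [hop]; exact hadd x y
  · rw [hpred]
    exact map_radical (AddMonoidHom.mk' g hadd) hx
  · rintro g' ⟨hhom, hc⟩
    funext x
    exact (hc (σ x) ⟨x, hmem x⟩).trans (hcoh (σ x) x (hmem x))

/-- Let `κ` be a regular uncountable cardinal.  If the inclusion functor
`𝒜 ↪ StrΣ` preserves `κ`-directed colimits — i.e. every colimit cocone in `𝒜` of a diagram
in `𝒜` indexed by a `κ`-directed partial order is also a colimit cocone in `StrΣ` — then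
`R_ℤ(G) = R_ℤ^κ(G)` for every abelian group `G`. -/
theorem stmt_13 (κ : Cardinal.{u}) (hreg : κ.IsRegular) (huncount : ℵ₀ < κ)
    (hpres : ∀ (I : Type u) (instI : PartialOrder I),
      (∀ s : Set I, #s < κ → ∃ k : I, ∀ i ∈ s, i ≤ k) →
      ∀ D : DiagS I, (∀ i : I, InA (D.obj i)) →
      ∀ (C : StrSig.{u}) (c : ∀ i : I, (D.obj i).carrier → C.carrier),
        InA C → IsColimitAmong InA D C c →
        IsColimitAmong (fun _ => True) D C c) :
    ∀ (G : Type u) [AddCommGroup G], radical ℤ G = radicalK κ ℤ G := by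
  intro G _
  have hdir : ∀ s : Set (SmallSub κ G), #s < κ → ∃ k : SmallSub κ G, ∀ i ∈ s, i ≤ k := by
    intro s hs
    set T : Set G := ⋃ A : s, ((A : SmallSub κ G).val : Set G) with hT
    have hTκ : #T < κ := by
      refine lt_of_le_of_lt Cardinal.mk_iUnion_le_sum_mk ?_
      exact Cardinal.sum_lt_of_isRegular hreg hs fun A => A.1.2
    refine ⟨⟨AddSubgroup.closure T,
      (mk_closure_le T).trans_lt (max_lt hTκ huncount)⟩, ?_⟩
    intro A hA
    show A.val ≤ AddSubgroup.closure T
    intro x hx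
    exact AddSubgroup.subset_closure (Set.mem_iUnion.mpr ⟨⟨A, hA⟩, hx⟩)
  have hcol := hpres (SmallSub κ G) inferInstance hdir (theDiag κ G)
    (fun A => ⟨(inferInstance : AddCommGroup A.val), fun _ _ => rfl, rfl⟩) (theC G) (fun A x => A.val.subtype x)
    ⟨(inferInstance : AddCommGroup G), fun _ _ => rfl, rfl⟩ (colimA huncount G)
  apply le_antisymm
  · -- radical ≤ radicalK, via the colimit property in StrΣ
    set Z : StrSig.{u} := ⟨G, (· + ·), (radicalK κ ℤ G : AddSubgroup G)⟩ with hZ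
    have hhoms : ∀ A : SmallSub κ G,
        IsStrHom ((theDiag κ G).obj A) Z (fun x => A.val.subtype x) := by
      intro A
      refine ⟨fun _ _ => rfl, fun x hx => ?_⟩
      show A.val.subtype x ∈ radicalK κ ℤ G
      exact le_iSup₂ (f := fun (B : AddSubgroup G) (_ : B ∈ {B : AddSubgroup G | #B < κ}) =>
        (radical ℤ B).map B.subtype) A.val A.2 ⟨x, hx, rfl⟩
    obtain ⟨g, ⟨ghom, gc⟩, -⟩ := hcol.2.2 Z trivial (fun A x => A.val.subtype x) hhoms
      (fun A B h x => rfl)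
    have hg : ∀ x : G, g x = x := by
      intro x
      exact gc ⟨AddSubgroup.closure {x}, radSmall_single huncount x⟩
        ⟨x, AddSubgroup.subset_closure rfl⟩
    intro x hx
    have h := ghom.2 x hx
    rw [hg x] at h
    exact h
  · -- radicalK ≤ radical (easy direction)
    refine iSup₂_le fun A hA => ?_
    intro x hx
    rw [AddSubgroup.mem_map] at hx
    obtain ⟨y, hy, rfl⟩ := hx
    simp only [radical, AddSubgroup.mem_iInf, AddMonoidHom.mem_ker] at hy ⊢
    intro f
    exact hy (f.comp A.subtype)
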